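/- Let φ be a singular-expansive flow on a compact metric space X. If Sing(φ) is dynamically isolated, then for every t>0 the set of periodic orbits of φ whose period lies in [0,t] is finite; that is, the collection of sets {φ_ℝ(x) : x is a periodic point of φ with least period ≤ t} is finite. -/

import Mathlib

open Set Metric Filter
open scoped Classical

variable {X : Type*}

/-- A (continuous) flow on a topological space, given as a map `φ : ℝ → X → X`. -/
def IsFlowMap [TopologicalSpace X] (φ : ℝ → X → X) : Prop :=
  Continuous (fun p : ℝ × X => φ p.1 p.2) ∧ (∀ x : X, φ 0 x = x) ∧
    ∀ t s : ℝ, ∀ x : X, φ (t + s) x = φ t (φ s x)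

/-- The singular set of a flow. -/
def SingSet (φ : ℝ → X → X) : Set X := {x : X | ∀ t : ℝ, φ t x = x}

/-- An increasing homeomorphism of `ℝ`: a strictly increasing continuous bijection. -/
def IncreasingHomeo (s : ℝ → ℝ) : Prop :=
  Continuous s ∧ StrictMono s ∧ Function.Bijective s

/-- Distance from a point to a set, with the convention that the distance
to the empty set is the diameter of the whole space. -/
noncomputable def distToSet [MetricSpace X] (z : X) (A : Set X) : ℝ :=
  if A = ∅ then Metric.diam (Set.univ : Set X) else Metric.infDist z A

/-- The orbit of a point under a flow. -/
def flowOrbit (φ : ℝ → X → X) (x : X) : Set X := Set.range fun t : ℝ => φ t x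

/-- Bowen–Walters expansivity of a flow on a subset `Λ`. -/
def ExpansiveOn [MetricSpace X] (φ : ℝ → X → X) (Λ : Set X) : Prop :=
  ∀ ε > (0:ℝ), ∃ δ > (0:ℝ), ∀ x ∈ Λ, ∀ y ∈ Λ, ∀ s : ℝ → ℝ, Continuous s → s 0 = 0 →
    (∀ t : ℝ, dist (φ t x) (φ (s t) y) ≤ δ) →
    ∃ τ ∈ Set.Icc (-ε) ε, y = φ τ x

/-- Komuro k*-expansivity of a flow on a subset `Λ`. -/
def KStarExpansiveOn [MetricSpace X] (φ : ℝ → X → X) (Λ : Set X) : Prop :=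
  ∀ ε > (0:ℝ), ∃ δ > (0:ℝ), ∀ x ∈ Λ, ∀ y ∈ Λ, ∀ s : ℝ → ℝ,
    IncreasingHomeo s → s 0 = 0 →
    (∀ t : ℝ, dist (φ t x) (φ (s t) y) ≤ δ) →
    ∃ t₀ : ℝ, ∃ τ ∈ Set.Icc (t₀ - ε) (t₀ + ε), φ (s t₀) y = φ τ x

/-- Singular expansivity of a flow on a subset `Λ`. -/
def SingularExpansiveOn [MetricSpace X] (φ : ℝ → X → X) (Λ : Set X) : Prop :=
  ∀ ε > (0:ℝ), ∃ δ > (0:ℝ), ∀ x ∈ Λ, ∀ y ∈ Λ, ∀ s : ℝ → ℝ, IncreasingHomeo s →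
    (∀ t : ℝ, dist (φ t x) (φ (s t) y) ≤ δ * distToSet (φ t x) (SingSet φ)) →
    ∃ t₀ : ℝ, ∃ τ ∈ Set.Icc (t₀ - ε) (t₀ + ε), φ (s t₀) y = φ τ x

/-- A periodic point of a flow: a nonsingular point with a positive period. -/
def IsPeriodicPoint (φ : ℝ → X → X) (x : X) : Prop :=
  x ∉ SingSet φ ∧ ∃ t : ℝ, 0 < t ∧ φ t x = x

/-- An invariant set `K` is dynamically isolated if it has a neighborhood `U`
with `K = ⋂_{t ∈ ℝ} φ_t(U)`. -/
def DynIsolated [TopologicalSpace X] (φ : ℝ → X → X) (K : Set X) : Prop :=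
  ∃ U : Set X, K ⊆ interior U ∧ K = ⋂ t : ℝ, φ t '' U

/-- Equicontinuity of a flow. -/
def EquicontinuousFlow [MetricSpace X] (φ : ℝ → X → X) : Prop :=
  ∀ ε > (0:ℝ), ∃ δ > (0:ℝ), ∀ x y : X, dist x y ≤ δ →
    ∀ t : ℝ, dist (φ t x) (φ t y) ≤ ε

/-- Singular equicontinuity of a flow. -/
def SingularEquicontinuous [MetricSpace X] (φ : ℝ → X → X) : Prop :=
  ∀ ε > (0:ℝ), ∃ δ > (0:ℝ), ∀ x y : X, dist x y ≤ δ * distToSet x (SingSet φ) →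
    ∀ t : ℝ, dist (φ t x) (φ t y) ≤ ε


section helpers
variable [MetricSpace X] {φ : ℝ → X → X}

lemma flow_cont_t (hφ : IsFlowMap φ) (x : X) : Continuous fun t : ℝ => φ t x :=
  hφ.1.comp (continuous_id.prodMk continuous_const)

lemma flow_cont_x (hφ : IsFlowMap φ) (t : ℝ) : Continuous fun z : X => φ t z :=
  hφ.1.comp (continuous_const.prodMk continuous_id)

lemma flow_zsmul (hφ : IsFlowMap φ) {a : ℝ} {x : X} (hx : φ a x = x) (k : ℤ) :
    φ ((k : ℝ) * a) x = x := by
  induction k using Int.induction_on with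
  | zero => simpa using hφ.2.1 x
  | succ n ih =>
      have h1 : ((n : ℝ) + 1) * a = a + (n : ℝ) * a := by ring
      push_cast
      rw [h1, hφ.2.2]
      rw [show ((n : ℤ) : ℝ) = (n : ℝ) by push_cast; rfl] at ih
      rw [ih]; exact hx
  | pred n ih =>
      have h1 : (-(n : ℝ) - 1) * a = (-(n:ℝ)) * a + (-a) := by ring
      push_cast at ih ⊢
      rw [h1, hφ.2.2]
      have hneg : φ (-a) x = x := by
        have h2 := hφ.2.2 (-a) a x
        rw [hx] at h2
        rw [show (-a) + a = (0:ℝ) by ring, hφ.2.1] at h2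
        exact h2.symm
      rw [hneg]; exact ih

lemma flow_reduce (hφ : IsFlowMap φ) {a : ℝ} {x : X} (ha : 0 < a) (hx : φ a x = x) (u : ℝ) :
    ∃ w, 0 ≤ w ∧ w < a ∧ φ u x = φ w x ∧ u = w + (⌊u/a⌋ : ℝ) * a := by
  set k : ℤ := ⌊u/a⌋ with hk
  refine ⟨u - (k:ℝ)*a, ?_, ?_, ?_, by ring⟩
  · have h1 : (k:ℝ) ≤ u / a := Int.floor_le _
    have := (le_div_iff₀ ha).mp h1
    linarith
  · have h1 : u / a < (k:ℝ) + 1 := Int.lt_floor_add_one _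
    have := (div_lt_iff₀ ha).mp h1
    nlinarith
  · have h2 : φ u x = φ (u - (k:ℝ)*a + (k:ℝ)*a) x := by ring_nf
    rw [h2, hφ.2.2, flow_zsmul hφ hx k]

lemma flowOrbit_shift (hφ : IsFlowMap φ) (c : ℝ) (x : X) :
    flowOrbit φ (φ c x) = flowOrbit φ x := by
  ext z
  constructor
  · rintro ⟨u, rfl⟩
    exact ⟨u + c, by simp only []; rw [hφ.2.2]⟩
  · rintro ⟨u, rfl⟩
    refine ⟨u - c, ?_⟩
    show φ (u - c) (φ c x) = φ u x
    rw [← hφ.2.2]; ring_nf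

lemma sing_of_flow_mem (hφ : IsFlowMap φ) {x : X} {s : ℝ}
    (hs : φ s x ∈ SingSet φ) : x ∈ SingSet φ := by
  have hx : x = φ s x := by
    have h1 := hs (-s)
    rw [← hφ.2.2] at h1
    have : φ 0 x = φ s x := by rw [show (0:ℝ) = -s + s by ring]; exact h1
    rwa [hφ.2.1] at this
  intro t
  calc φ t x = φ t (φ s x) := by rw [← hx]
    _ = φ s x := hs t
    _ = x := hx.symm

lemma isClosed_sing (hφ : IsFlowMap φ) : IsClosed (SingSet φ) := by
  have h1 : SingSet φ = ⋂ t : ℝ, {x : X | φ t x = x} := by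
    ext x; simp [SingSet]
  rw [h1]
  exact isClosed_iInter fun t => isClosed_eq (flow_cont_x hφ t) continuous_id

lemma exists_period_le (hφ : IsFlowMap φ) {x : X} {t : ℝ} (ht : 0 < t)
    (hper : ∃ τ : ℝ, 0 < τ ∧ φ τ x = x)
    (hinf : sInf {τ : ℝ | 0 < τ ∧ φ τ x = x} ≤ t) :
    ∃ a, 0 < a ∧ a ≤ t ∧ φ a x = x := by
  set P := {τ : ℝ | 0 < τ ∧ φ τ x = x} with hP
  have hne : P.Nonempty := hper
  have hbdd : BddBelow P := ⟨0, fun τ hτ => hτ.1.le⟩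
  rcases lt_or_eq_of_le hinf with hlt | heq
  · obtain ⟨τ, hτP, hτt⟩ := (csInf_lt_iff hbdd hne).mp hlt
    exact ⟨τ, hτP.1, hτt.le, hτP.2⟩
  · have hcl : closure P ⊆ {τ : ℝ | φ τ x = x} :=
      closure_minimal (fun τ hτ => hτ.2)
        (isClosed_eq (flow_cont_t hφ x) continuous_const)
    have hmem := hcl (csInf_mem_closure hne hbdd)
    rw [heq] at hmem
    exact ⟨t, ht, le_refl t, hmem⟩

lemma flow_unif (hφ : IsFlowMap φ) [CompactSpace X] (T : ℝ) {η : ℝ} (hη : 0 < η) :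
    ∃ ζ > 0, ∀ s s' : ℝ, |s| ≤ T → |s'| ≤ T → |s - s'| ≤ ζ →
      ∀ z z' : X, dist z z' ≤ ζ → dist (φ s z) (φ s' z') ≤ η := by
  have hK : IsCompact ((Icc (-T) T) ×ˢ (univ : Set X)) := isCompact_Icc.prod isCompact_univ
  have huc := hK.uniformContinuousOn_of_continuous (hφ.1.continuousOn)
  obtain ⟨ζ, hζ, hζ'⟩ := Metric.uniformContinuousOn_iff_le.mp huc η hη
  refine ⟨ζ, hζ, fun s s' hs hs' hss z z' hzz => ?_⟩
  have h1 : ((s : ℝ), z) ∈ (Icc (-T) T) ×ˢ (univ : Set X) := ⟨abs_le.mp hs, mem_univ _⟩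
  have h2 : ((s' : ℝ), z') ∈ (Icc (-T) T) ×ˢ (univ : Set X) := ⟨abs_le.mp hs', mem_univ _⟩
  have hd : dist ((s : ℝ), z) ((s' : ℝ), z') ≤ ζ := by
    rw [Prod.dist_eq]
    exact max_le (by rwa [Real.dist_eq]) hzz
  exact hζ' _ h1 _ h2 hd

lemma distToSet_lower (z w : X) (A : Set X) :
    distToSet w A - dist z w ≤ distToSet z A := by
  unfold distToSet
  split
  · linarith [dist_nonneg (x := z) (y := w)]
  · have h1 : Metric.infDist w A ≤ Metric.infDist z A + dist w z :=
      Metric.infDist_le_infDist_add_dist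
    have := dist_comm z w
    linarith

lemma exists_pos_le_distToSet (hφ : IsFlowMap φ) {C : Set X} (hC : IsCompact C)
    (hCne : C.Nonempty) (hdisj : ∀ z ∈ C, z ∉ SingSet φ)
    (htwo : ∃ a b : X, a ≠ b) [CompactSpace X] :
    ∃ R > 0, ∀ z ∈ C, R ≤ distToSet z (SingSet φ) := by
  by_cases hSe : SingSet φ = ∅
  · obtain ⟨a, b, hab⟩ := htwo
    refine ⟨dist a b, dist_pos.mpr hab, fun z hz => ?_⟩
    unfold distToSet
    rw [if_pos hSe]
    exact Metric.dist_le_diam_of_mem isCompact_univ.isBounded (mem_univ a) (mem_univ b)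
  · have hSne : (SingSet φ).Nonempty := nonempty_iff_ne_empty.mpr hSe
    have hcont : ContinuousOn (fun z : X => Metric.infDist z (SingSet φ)) C :=
      (Metric.continuous_infDist_pt _).continuousOn
    obtain ⟨z₀, hz₀C, hmin⟩ := hC.exists_isMinOn hCne hcont
    have hpos : 0 < Metric.infDist z₀ (SingSet φ) := by
      rw [← (isClosed_sing hφ).notMem_iff_infDist_pos hSne]
      exact hdisj z₀ hz₀C
    refine ⟨_, hpos, fun z hz => ?_⟩
    unfold distToSet
    rw [if_neg hSe]
    exact hmin hz

end helpers

set_option maxHeartbeats 1000000 in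
theorem singular_expansive_dyn_isolated_finitely_many_periodic_orbits
    [MetricSpace X] [CompactSpace X] (φ : ℝ → X → X) (hφ : IsFlowMap φ)
    (h : SingularExpansiveOn φ Set.univ) (hiso : DynIsolated φ (SingSet φ)) :
    ∀ t : ℝ, 0 < t →
      Set.Finite {O : Set X | ∃ x : X, IsPeriodicPoint φ x ∧
        sInf {τ : ℝ | 0 < τ ∧ φ τ x = x} ≤ t ∧ O = flowOrbit φ x} := by
  intro t ht
  by_contra hfin
  have hinf : Set.Infinite {O : Set X | ∃ x : X, IsPeriodicPoint φ x ∧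
      sInf {τ : ℝ | 0 < τ ∧ φ τ x = x} ≤ t ∧ O = flowOrbit φ x} := hfin
  obtain ⟨U, hU1, hU2⟩ := hiso
  let e := hinf.natEmbedding
  -- select base points on each orbit, outside interior U, with a period in (0, t]
  have Hsel : ∀ n : ℕ, ∃ (p : X) (a : ℝ), (e n : Set X) = flowOrbit φ p ∧
      p ∉ interior U ∧ 0 < a ∧ a ≤ t ∧ φ a p = p := by
    intro n
    obtain ⟨x, hxper, hxinf, hxO⟩ := (e n).2
    obtain ⟨a, ha0, hat, hax⟩ := exists_period_le hφ ht hxper.2 hxinf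
    by_cases hall : ∀ c : ℝ, φ c x ∈ interior U
    · exfalso
      apply hxper.1
      have hmem : x ∈ ⋂ s : ℝ, φ s '' U := by
        refine mem_iInter.mpr fun s => ⟨φ (-s) x, interior_subset (hall (-s)), ?_⟩
        rw [← hφ.2.2]
        simp [hφ.2.1]
      rwa [← hU2] at hmem
    · push_neg at hall
      obtain ⟨c, hc⟩ := hall
      refine ⟨φ c x, a, ?_, hc, ha0, hat, ?_⟩
      · rw [hxO, flowOrbit_shift hφ c x]
      · rw [← hφ.2.2, add_comm, hφ.2.2, hax]
  choose p a hOrb hKc ha0 hat hap using Hsel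
  -- extract a convergent subsequence of (p n, a n)
  have hmem : ∀ n, (p n, a n) ∈ (univ : Set X) ×ˢ Icc (0:ℝ) t :=
    fun n => ⟨mem_univ _, ⟨(ha0 n).le, hat n⟩⟩
  obtain ⟨q, hqmem, g, hg, hgt⟩ :=
    (isCompact_univ.prod isCompact_Icc).tendsto_subseq hmem
  obtain ⟨xs, τs⟩ := q
  have hpt : Tendsto (fun k => p (g k)) atTop (nhds xs) :=
    (continuous_fst.tendsto _).comp hgt
  have hat' : Tendsto (fun k => a (g k)) atTop (nhds τs) :=
    (continuous_snd.tendsto _).comp hgt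
  have hxsK : xs ∉ interior U := by
    have hcl : IsClosed ((interior U)ᶜ) := isOpen_interior.isClosed_compl
    exact hcl.mem_of_tendsto hpt (Eventually.of_forall fun k => hKc (g k))
  have hxsS : xs ∉ SingSet φ := fun hxs => hxsK (hU1 hxs)
  -- the limit orbit piece is compact and away from the singular set
  set C : Set X := (fun u : ℝ => φ u xs) '' Icc 0 (t+1) with hCdef
  have hCcp : IsCompact C := isCompact_Icc.image (flow_cont_t hφ xs)
  have hCne : C.Nonempty := ⟨_, ⟨0, ⟨le_refl 0, by linarith⟩, rfl⟩⟩
  have hCdisj : ∀ z ∈ C, z ∉ SingSet φ := by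
    rintro z ⟨u, hu, rfl⟩ hz
    exact hxsS (sing_of_flow_mem hφ hz)
  have htwo : ∃ a b : X, a ≠ b := by
    by_contra hno
    push_neg at hno
    have hall : ∀ n z, z ∈ (e n : Set X) := by
      intro n z
      rw [hOrb n]
      exact ⟨0, by show φ 0 (p n) = z; rw [hφ.2.1]; exact hno _ _⟩
    have h01 : (e 0 : Set X) = (e 1 : Set X) := by
      ext z; exact iff_of_true (hall 0 z) (hall 1 z)
    exact (by norm_num : (0:ℕ) ≠ 1) (e.injective (Subtype.ext h01))
  obtain ⟨R, hR, hRle⟩ := exists_pos_le_distToSet hφ hCcp hCne hCdisj htwo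
  obtain ⟨δ, hδ, hexp⟩ := h 1 one_pos
  set η := min (δ * (R/2)) (R/2) with hηdef
  have hη0 : 0 < η := lt_min (by positivity) (by positivity)
  obtain ⟨ζ, hζ0, hζ⟩ := flow_unif hφ (t+1) hη0
  obtain ⟨N1, hN1⟩ := Metric.tendsto_atTop.mp hpt (ζ/2) (by positivity)
  obtain ⟨N2, hN2⟩ := Metric.tendsto_atTop.mp hat' (ζ/2) (by positivity)
  set N := max N1 N2 with hNdef
  set n := g N with hndef
  set m := g (N+1) with hmdef
  have hdpn : dist (p n) xs < ζ/2 := hN1 N (le_max_left _ _)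
  have hdpm : dist (p m) xs < ζ/2 := hN1 (N+1) (le_trans (le_max_left _ _) (Nat.le_succ _))
  have hdan : |a n - τs| < ζ/2 := by
    have := hN2 N (le_max_right _ _); rwa [Real.dist_eq] at this
  have hdam : |a m - τs| < ζ/2 := by
    have := hN2 (N+1) (le_trans (le_max_right _ _) (Nat.le_succ _))
    rwa [Real.dist_eq] at this
  have hdnm : dist (p n) (p m) ≤ ζ := by
    have h1 := dist_triangle (p n) xs (p m)
    have h2 : dist xs (p m) = dist (p m) xs := dist_comm _ _
    linarith
  have hanm : |a n - a m| ≤ ζ := by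
    have h1 : |a n - a m| ≤ |a n - τs| + |τs - a m| := abs_sub_le _ _ _
    have h2 : |τs - a m| = |a m - τs| := abs_sub_comm _ _
    linarith
  have hdpnxs : dist (p n) xs ≤ ζ := by linarith
  -- the reparametrization
  have hc0 : 0 < a m / a n := div_pos (ha0 m) (ha0 n)
  have hmono : StrictMono (fun u : ℝ => (a m / a n) * u) :=
    fun u v huv => by exact mul_lt_mul_of_pos_left huv hc0
  have hIH : IncreasingHomeo (fun u : ℝ => (a m / a n) * u) := by
    refine ⟨continuous_const.mul continuous_id, hmono, hmono.injective, fun v => ⟨v / (a m / a n), ?_⟩⟩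
    show (a m / a n) * (v / (a m / a n)) = v
    rw [mul_div_cancel₀ _ hc0.ne']
  -- the key estimate
  have hkey : ∀ u : ℝ, dist (φ u (p n)) (φ ((a m / a n) * u) (p m)) ≤
      δ * distToSet (φ u (p n)) (SingSet φ) := by
    intro u
    obtain ⟨w, hw0, hw1, hweq, hudec⟩ := flow_reduce hφ (ha0 n) (hap n) u
    have han := ha0 n
    have ham := ha0 m
    have hσ : (a m / a n) * u = (a m / a n) * w + (⌊u / a n⌋ : ℝ) * a m := by
      calc (a m / a n) * u = (a m / a n) * (w + (⌊u / a n⌋ : ℝ) * a n) := by rw [← hudec]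
        _ = (a m / a n) * w + (⌊u / a n⌋ : ℝ) * a m := by field_simp
    have hφσ : φ ((a m / a n) * u) (p m) = φ ((a m / a n) * w) (p m) := by
      rw [hσ, hφ.2.2, flow_zsmul hφ (hap m) ⌊u / a n⌋]
    have hwt : w ≤ t := le_trans hw1.le (hat n)
    have hσwle : (a m / a n) * w ≤ a m := by
      rw [div_mul_eq_mul_div, div_le_iff₀ han]
      nlinarith
    have hσw0' : 0 ≤ (a m / a n) * w := mul_nonneg hc0.le hw0
    have hbw : |w| ≤ t + 1 := by rw [abs_of_nonneg hw0]; linarith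
    have hbσw : |(a m / a n) * w| ≤ t + 1 := by
      rw [abs_of_nonneg hσw0']
      linarith [hat m]
    have hζw : |w - (a m / a n) * w| ≤ ζ := by
      have hid : (w - (a m / a n) * w) * a n = w * (a n - a m) := by
        field_simp
      have habs := abs_le.mp hanm
      rw [abs_le]
      constructor <;>
        nlinarith [hid, mul_le_mul_of_nonneg_left habs.2 hw0,
          mul_le_mul_of_nonneg_left habs.1 hw0,
          mul_le_mul_of_nonneg_right hw1.le hζ0.le, han, hw0]
    have hd1 : dist (φ w (p n)) (φ ((a m / a n) * w) (p m)) ≤ η :=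
      hζ w _ hbw hbσw hζw _ _ hdnm
    have hd2 : dist (φ w (p n)) (φ w xs) ≤ η :=
      hζ w w hbw hbw (by simpa using hζ0.le) _ _ hdpnxs
    have hφwxs : φ w xs ∈ C := ⟨w, ⟨hw0, by linarith⟩, rfl⟩
    have hdistS : R/2 ≤ distToSet (φ w (p n)) (SingSet φ) := by
      have h3 := distToSet_lower (φ w (p n)) (φ w xs) (SingSet φ)
      have h4 := hRle _ hφwxs
      have hd2' : dist (φ w (p n)) (φ w xs) ≤ R/2 := le_trans hd2 (min_le_right _ _)
      linarith
    calc dist (φ u (p n)) (φ ((a m / a n) * u) (p m))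
        = dist (φ w (p n)) (φ ((a m / a n) * w) (p m)) := by rw [hweq, hφσ]
      _ ≤ η := hd1
      _ ≤ δ * (R/2) := min_le_left _ _
      _ ≤ δ * distToSet (φ u (p n)) (SingSet φ) := by
          rw [hweq]; exact mul_le_mul_of_nonneg_left hdistS hδ.le
  obtain ⟨t₀, τ', _, hτ'eq⟩ := hexp (p n) (mem_univ _) (p m) (mem_univ _) _ hIH hkey
  have hpm : p m ∈ flowOrbit φ (p n) := by
    refine ⟨τ' - (a m / a n) * t₀, ?_⟩
    show φ (τ' - (a m / a n) * t₀) (p n) = p m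
    calc φ (τ' - (a m / a n) * t₀) (p n)
        = φ (-((a m / a n) * t₀)) (φ τ' (p n)) := by rw [← hφ.2.2]; congr 1; ring
      _ = φ (-((a m / a n) * t₀)) (φ ((a m / a n) * t₀) (p m)) := by rw [hτ'eq]
      _ = p m := by rw [← hφ.2.2]; simp [hφ.2.1]
  have horb : flowOrbit φ (p m) = flowOrbit φ (p n) := by
    obtain ⟨c, hc⟩ := hpm
    rw [← hc]
    exact flowOrbit_shift hφ c (p n)
  have heqs : (e n : Set X) = (e m : Set X) := by
    rw [hOrb n, hOrb m, horb]
  have hnm : n = m := e.injective (Subtype.ext heqs)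
  have : N < N + 1 := Nat.lt_succ_self N
  exact absurd hnm (Nat.ne_of_lt (hg this))
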